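/- arXiv:0901.0852 — 3 statements merged into one kernel-verified Lean document; each statement's English description precedes it below -/
import Mathlib

section
/- Let (K, ≼) be an abstract elementary class, let I be a directed partial order, and suppose for each s ∈ I we have a model M_s ∈ K such that s ≤_I t implies M_s ≼ M_t. Then (1) for every s ∈ I, M_s ≼ ⋃{M_t : t ∈ I} and ⋃{M_t : t ∈ I} ∈ K; and (2) if N ∈ K and M_s ≼ N for every s ∈ I, then ⋃{M_s : s ∈ I} ≼ N. -/
open FirstOrder Cardinal Set

universe u

variable {L : FirstOrder.Language.{u, u}} {U : Type u} [L.Structure U]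

/-- The supremum (union) of an ordinal-indexed family of substructures over indices `< δ`. -/
def osup (f : Ordinal.{u} → L.Substructure U) (δ : Ordinal.{u}) : L.Substructure U :=
  ⨆ γ : {γ : Ordinal.{u} // γ < δ}, f γ.1

/-- An abstract elementary class whose models are substructures of an ambient
`L`-structure `U`. -/
structure AEC (L : FirstOrder.Language.{u, u}) (U : Type u) [L.Structure U] :
    Type (u + 1) where
  K : Set (L.Substructure U)
  strong : L.Substructure U → L.Substructure U → Prop
  strong_mem_left : ∀ {M N}, strong M N → M ∈ K
  strong_mem_right : ∀ {M N}, strong M N → N ∈ K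
  strong_le : ∀ {M N}, strong M N → M ≤ N
  strong_refl : ∀ {M}, M ∈ K → strong M M
  strong_trans : ∀ {M N P}, strong M N → strong N P → strong M P
  coherence : ∀ {M N P}, M ≤ N → strong M P → strong N P → strong M N
  iso_closed : ∀ {M N : L.Substructure U}, M ∈ K → Nonempty (↥M ≃[L] ↥N) → N ∈ K
  chain_closed : ∀ (δ : Ordinal.{u}) (f : Ordinal.{u} → L.Substructure U),
    Order.IsSuccLimit δ →
    (∀ α β, α ≤ β → β < δ → strong (f α) (f β)) →
    (∀ β, β < δ → Order.IsSuccLimit β → f β = osup f β) →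
    osup f δ ∈ K ∧ ∀ α, α < δ → strong (f α) (osup f δ)
  smooth : ∀ (δ : Ordinal.{u}) (f : Ordinal.{u} → L.Substructure U)
      (N : L.Substructure U), Order.IsSuccLimit δ →
    (∀ α β, α ≤ β → β < δ → strong (f α) (f β)) →
    (∀ β, β < δ → Order.IsSuccLimit β → f β = osup f β) →
    (∀ α, α < δ → strong (f α) N) →
    strong (osup f δ) N
  lst : Cardinal.{u}
  lst_prop : ∀ N ∈ K, ∀ A : Set U, A ⊆ (N : Set U) →
    ∃ M ∈ K, A ⊆ (M : Set U) ∧ strong M N ∧ #↥M ≤ lst + #↥A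

namespace AEC

variable (A : AEC L U)

/-- `g : U → U` restricts to a `≼`-embedding of `M` into `N`. -/
def IsEmbOn (M N : L.Substructure U) (g : U → U) : Prop :=
  ∃ (M' : L.Substructure U) (e : ↥M ≃[L] ↥M'),
    A.strong M' N ∧ ∀ x : M, g (x : U) = (e x : U)

/-- `M` embeds into `N` over `M₀` (i.e. fixing `M₀` pointwise). -/
def EmbedsOver (M₀ M N : L.Substructure U) : Prop :=
  ∃ g : U → U, A.IsEmbOn M N g ∧ ∀ x ∈ (M₀ : Set U), g x = x

/-- `M` embeds into `N` over `M₀`, sending `a` to `b`. -/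
def EmbedsOverPt (M₀ M N : L.Substructure U) (a b : U) : Prop :=
  ∃ g : U → U, A.IsEmbOn M N g ∧ (∀ x ∈ (M₀ : Set U), g x = x) ∧ g a = b

/-- One approximation step of equality of Galois types over `M₀`. -/
def TypeStep (M₀ : L.Substructure U) (p q : L.Substructure U × U) : Prop :=
  A.strong M₀ p.1 ∧ A.strong M₀ q.1 ∧ p.2 ∈ p.1 ∧ q.2 ∈ q.1 ∧
    ∃ N₂, A.strong q.1 N₂ ∧ A.EmbedsOverPt M₀ p.1 N₂ p.2 q.2

/-- Equality of Galois types over `M₀` (the transitive-symmetric closure of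
the one-step relation). -/
def TypeEq (M₀ : L.Substructure U) (p q : L.Substructure U × U) : Prop :=
  Relation.EqvGen (A.TypeStep M₀) p q

/-- `M` is saturated in `λ⁺` over `λ`: every Galois type over a `≼`-submodel of
`M` of cardinality `λ` is realized in `M`. -/
def SaturatedAbove (lam : Cardinal.{u}) (M : L.Substructure U) : Prop :=
  ∀ N, N ∈ A.K → #↥N = lam → A.strong N M →
    ∀ N₁ (a : U), A.strong N N₁ → a ∈ N₁ →
      ∃ b ∈ (M : Set U), A.TypeEq N (N₁, a) (M, b)

/-- `M` is model-homogeneous in `λ⁺` over `λ`. -/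
def HomogeneousAbove (lam : Cardinal.{u}) (M : L.Substructure U) : Prop :=
  ∀ N₁ N₂, N₁ ∈ A.K → #↥N₁ = lam → N₂ ∈ A.K → #↥N₂ = lam →
    A.strong N₁ M → A.strong N₁ N₂ → A.EmbedsOver N₁ N₂ M

/-- Amalgamation in `K_λ`. -/
def AmalgIn (lam : Cardinal.{u}) : Prop :=
  ∀ M₀ M₁ M₂ : L.Substructure U, #↥M₀ = lam → #↥M₁ = lam → #↥M₂ = lam →
    A.strong M₀ M₁ → A.strong M₀ M₂ →
    ∃ M₃, M₃ ∈ A.K ∧ #↥M₃ = lam ∧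
      A.EmbedsOver M₀ M₁ M₃ ∧ A.EmbedsOver M₀ M₂ M₃

/-- Joint embedding in `K_λ`. -/
def JEPIn (lam : Cardinal.{u}) : Prop :=
  ∀ M₁ M₂, M₁ ∈ A.K → #↥M₁ = lam → M₂ ∈ A.K → #↥M₂ = lam →
    ∃ M₃, M₃ ∈ A.K ∧ #↥M₃ = lam ∧
      A.EmbedsOver ⊥ M₁ M₃ ∧ A.EmbedsOver ⊥ M₂ M₃

end AEC

/-- `C` is a closed unbounded subset of the ordinal `δ`. -/
def IsClubIn (C : Set Ordinal.{u}) (δ : Ordinal.{u}) : Prop :=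
  (∀ β < δ, ∃ γ, β < γ ∧ γ < δ ∧ γ ∈ C) ∧
    ∀ β < δ, Order.IsSuccLimit β →
      (∀ γ < β, ∃ γ', γ < γ' ∧ γ' < β ∧ γ' ∈ C) → β ∈ C

/-- `S` is a stationary subset of the ordinal `δ`. -/
def IsStatIn (S : Set Ordinal.{u}) (δ : Ordinal.{u}) : Prop :=
  S ⊆ Set.Iio δ ∧ ∀ C, IsClubIn C δ → ∃ γ, γ ∈ S ∧ γ ∈ C


section Cl
variable {I : Type u}

/-- Finite stages of the closure of a set under a binary operation. -/
def clStep (ub : I → I → I) : ℕ → Set I → Set I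
  | 0, S => S
  | n+1, S => clStep ub n S ∪ Set.image2 ub (clStep ub n S) (clStep ub n S)

/-- The closure of a set under a binary operation. -/
def clS (ub : I → I → I) (S : Set I) : Set I := ⋃ n, clStep ub n S

lemma subset_clS (ub : I → I → I) (S : Set I) : S ⊆ clS ub S :=
  Set.subset_iUnion (fun n => clStep ub n S) 0

lemma clStep_succ_subset (ub : I → I → I) (n : ℕ) (S : Set I) :
    clStep ub n S ⊆ clStep ub (n+1) S := Set.subset_union_left

lemma clStep_mono_n (ub : I → I → I) {m n : ℕ} (h : m ≤ n) (S : Set I) :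
    clStep ub m S ⊆ clStep ub n S := by
  induction n with
  | zero => simp [Nat.le_zero.mp h]
  | succ n ih =>
    rcases Nat.lt_or_ge m (n+1) with h' | h'
    · exact (ih (Nat.lt_succ_iff.mp h')).trans (clStep_succ_subset ub n S)
    · have : m = n + 1 := le_antisymm h h'
      simp [this]

lemma ub_mem_clS (ub : I → I → I) (S : Set I) {x y : I}
    (hx : x ∈ clS ub S) (hy : y ∈ clS ub S) : ub x y ∈ clS ub S := by
  obtain ⟨m, hm⟩ := Set.mem_iUnion.mp hx
  obtain ⟨n, hn⟩ := Set.mem_iUnion.mp hy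
  refine Set.mem_iUnion.mpr ⟨max m n + 1, Set.mem_union_right _ ?_⟩
  exact Set.mem_image2_of_mem (clStep_mono_n ub (le_max_left m n) S hm)
    (clStep_mono_n ub (le_max_right m n) S hn)

lemma clStep_mono_set (ub : I → I → I) (n : ℕ) {S T : Set I} (h : S ⊆ T) :
    clStep ub n S ⊆ clStep ub n T := by
  induction n with
  | zero => exact h
  | succ n ih => exact Set.union_subset_union ih (Set.image2_subset ih ih)

lemma clS_mono (ub : I → I → I) {S T : Set I} (h : S ⊆ T) : clS ub S ⊆ clS ub T :=
  Set.iUnion_mono fun n => clStep_mono_set ub n h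

lemma clStep_iUnion {ι : Sort v} (ub : I → I → I) (f : ι → Set I)
    (hdir : ∀ i j : ι, ∃ k, f i ⊆ f k ∧ f j ⊆ f k) (n : ℕ) [Nonempty ι] :
    ∀ x ∈ clStep ub n (⋃ i, f i), ∃ i, x ∈ clStep ub n (f i) := by
  induction n with
  | zero => exact fun x hx => Set.mem_iUnion.mp hx
  | succ n ih =>
    intro x hx
    rcases hx with hx | hx
    · obtain ⟨i, hi⟩ := ih x hx
      exact ⟨i, Set.mem_union_left _ hi⟩
    · obtain ⟨a, ha, b, hb, rfl⟩ := hx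
      obtain ⟨i, hi⟩ := ih a ha
      obtain ⟨j, hj⟩ := ih b hb
      obtain ⟨k, hik, hjk⟩ := hdir i j
      exact ⟨k, Set.mem_union_right _ (Set.mem_image2_of_mem
        (clStep_mono_set ub n hik hi) (clStep_mono_set ub n hjk hj))⟩

lemma clS_iUnion {ι : Sort v} (ub : I → I → I) (f : ι → Set I) [Nonempty ι]
    (hdir : ∀ i j : ι, ∃ k, f i ⊆ f k ∧ f j ⊆ f k) :
    clS ub (⋃ i, f i) = ⋃ i, clS ub (f i) := by
  apply Set.Subset.antisymm
  · intro x hx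
    obtain ⟨n, hn⟩ := Set.mem_iUnion.mp hx
    obtain ⟨i, hi⟩ := clStep_iUnion ub f hdir n x hn
    exact Set.mem_iUnion.mpr ⟨i, Set.mem_iUnion.mpr ⟨n, hi⟩⟩
  · exact Set.iUnion_subset fun i => clS_mono ub (Set.subset_iUnion f i)

lemma mk_clStep_le (ub : I → I → I) (n : ℕ) (S : Set I) :
    #(clStep ub n S) ≤ max ℵ₀ #S := by
  induction n with
  | zero => exact le_max_right _ _
  | succ n ih =>
    have hinf : ℵ₀ ≤ max ℵ₀ #S := le_max_left _ _
    calc #(clStep ub (n+1) S)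
        ≤ #(clStep ub n S) + #(Set.image2 ub (clStep ub n S) (clStep ub n S)) :=
          Cardinal.mk_union_le _ _
      _ ≤ max ℵ₀ #S + #(clStep ub n S) * #(clStep ub n S) :=
          add_le_add ih Cardinal.mk_image2_le
      _ ≤ max ℵ₀ #S + max ℵ₀ #S * max ℵ₀ #S :=
          add_le_add le_rfl (mul_le_mul' ih ih)
      _ = max ℵ₀ #S + max ℵ₀ #S := by rw [Cardinal.mul_eq_self hinf]
      _ = max ℵ₀ #S := Cardinal.add_eq_self hinf

lemma mk_clS_le (ub : I → I → I) (S : Set I) : #(clS ub S) ≤ max ℵ₀ #S := by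
  have h1 : clS ub S = ⋃ n : ULift.{u} ℕ, clStep ub n.down S := by
    ext x; simp [clS, Set.mem_iUnion]
  rw [h1]
  calc #(⋃ n : ULift.{u} ℕ, clStep ub n.down S)
      ≤ #(ULift.{u} ℕ) * ⨆ n : ULift.{u} ℕ, #(clStep ub n.down S) :=
        Cardinal.mk_iUnion_le _
    _ ≤ ℵ₀ * max ℵ₀ #S := by
        apply mul_le_mul'
        · exact le_of_eq (Cardinal.mk_denumerable _)
        · exact ciSup_le' fun n => mk_clStep_le ub n.down S
    _ ≤ max ℵ₀ #S * max ℵ₀ #S := mul_le_mul' (le_max_left _ _) le_rfl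
    _ = max ℵ₀ #S := Cardinal.mul_eq_self (le_max_left _ _)

end Cl


/-- The conclusion of the directed-union theorem, as a predicate on cardinals:
it holds for all directed index types of cardinality at most `κ`. -/
def AECP (A : AEC L U) (κ : Cardinal.{u}) : Prop :=
  ∀ (I : Type u) [PartialOrder I] [Nonempty I], #I ≤ κ →
    ∀ (M : I → L.Substructure U),
      (∀ s t : I, ∃ r, s ≤ r ∧ t ≤ r) →
      (∀ s t : I, s ≤ t → A.strong (M s) (M t)) →
      ((⨆ s, M s) ∈ A.K ∧ ∀ s : I, A.strong (M s) (⨆ s, M s)) ∧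
        ∀ N : L.Substructure U, (∀ s : I, A.strong (M s) N) →
          A.strong (⨆ s, M s) N

theorem AECP_all (A : AEC L U) (κ : Cardinal.{u}) : AECP A κ := by
  induction κ using Cardinal.lt_wf.induction with
  | _ κ IH =>
  intro I iP iN hIκ M hdir hmono
  choose ubf hub1 hub2 using hdir
  by_cases hcount : #I ≤ ℵ₀
  · -- countable case: build a cofinal ω-chain
    have hCnt : Countable I := Cardinal.mk_le_aleph0_iff.mp hcount
    obtain ⟨e, he⟩ := exists_surjective_nat I
    let t : ℕ → I := fun n => Nat.rec (e 0) (fun n tn => ubf tn (e (n+1))) n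
    have htsucc : ∀ n, t n ≤ t (n+1) := fun n => hub1 _ _
    have htmono : Monotone t := monotone_nat_of_le_succ htsucc
    have het : ∀ n, e n ≤ t n := by
      rintro (_ | n)
      · exact le_rfl
      · exact hub2 _ _
    let f : Ordinal.{u} → L.Substructure U :=
      fun α => ⨆ n : {n : ℕ // (n : Ordinal.{u}) ≤ α}, M (t n)
    have hfnat : ∀ n : ℕ, f n = M (t n) := by
      intro n
      apply le_antisymm
      · exact iSup_le fun m => A.strong_le (hmono _ _ (htmono (by exact_mod_cast m.2)))
      · exact le_iSup (fun m : {m : ℕ // (m : Ordinal.{u}) ≤ (n : Ordinal.{u})} => M (t m))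
          ⟨n, le_rfl⟩
    have hchain : ∀ α β, α ≤ β → β < Ordinal.omega0 → A.strong (f α) (f β) := by
      intro α β hab hb
      obtain ⟨n, rfl⟩ := Ordinal.lt_omega0.mp hb
      obtain ⟨m, rfl⟩ := Ordinal.lt_omega0.mp (lt_of_le_of_lt hab hb)
      rw [hfnat, hfnat]
      exact hmono _ _ (htmono (by exact_mod_cast hab))
    have hcont : ∀ β, β < Ordinal.omega0 → Order.IsSuccLimit β → f β = osup f β := by
      intro β hb hlim
      exact absurd (Ordinal.omega0_le_of_isSuccLimit hlim) (not_le.mpr hb)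
    obtain ⟨hK, hstr⟩ := A.chain_closed Ordinal.omega0 f Ordinal.isSuccLimit_omega0 hchain hcont
    have hsup : osup f Ordinal.omega0 = ⨆ s, M s := by
      apply le_antisymm
      · apply iSup_le
        rintro ⟨γ, hγ⟩
        obtain ⟨n, rfl⟩ := Ordinal.lt_omega0.mp hγ
        rw [hfnat]
        exact le_iSup M (t n)
      · apply iSup_le
        intro s
        obtain ⟨n, rfl⟩ := he s
        calc M (e n) ≤ M (t n) := A.strong_le (hmono _ _ (het n))
          _ = f n := (hfnat n).symm
          _ ≤ osup f Ordinal.omega0 :=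
            le_iSup (fun γ : {γ : Ordinal.{u} // γ < Ordinal.omega0} => f γ.1)
              ⟨(n : Ordinal.{u}), Ordinal.nat_lt_omega0 n⟩
    refine ⟨⟨hsup ▸ hK, fun s => ?_⟩, fun N hN => ?_⟩
    · obtain ⟨n, rfl⟩ := he s
      have h1 : A.strong (M (e n)) (M (t n)) := hmono _ _ (het n)
      have h2 := hstr n (Ordinal.nat_lt_omega0 n)
      rw [hfnat] at h2
      exact hsup ▸ A.strong_trans h1 h2
    · have hsm := A.smooth Ordinal.omega0 f N Ordinal.isSuccLimit_omega0 hchain hcont ?_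
      · exact hsup ▸ hsm
      · intro α hα
        obtain ⟨n, rfl⟩ := Ordinal.lt_omega0.mp hα
        rw [hfnat]
        exact hN (t n)
  · -- uncountable case
    push_neg at hcount
    set μ := #I with hμ
    set o := μ.ord with ho
    have holim : Order.IsSuccLimit o := Cardinal.isSuccLimit_ord (le_of_lt hcount)
    have s0 : I := Classical.arbitrary I
    obtain ⟨e⟩ : Nonempty (o.ToType ≃ I) := by
      rw [← Cardinal.eq, Cardinal.mk_toType, ho, Cardinal.card_ord]
    let eh : Ordinal.{u} → I := fun γ =>
      if h : γ < o then e ((Ordinal.ToType.mk (o := o)) ⟨γ, h⟩) else s0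
    have hsurj : ∀ s : I, ∃ γ, γ < o ∧ eh γ = s := by
      intro s
      obtain ⟨⟨γ, hγ⟩, hx⟩ := (Ordinal.ToType.mk (o := o)).surjective (e.symm s)
      refine ⟨γ, hγ, ?_⟩
      show (if h : γ < o then e ((Ordinal.ToType.mk (o := o)) ⟨γ, h⟩) else s0) = s
      rw [Set.mem_Iio] at hγ
      rw [dif_pos hγ, hx, Equiv.apply_symm_apply]
    let AS : Ordinal.{u} → Set I := fun β => insert s0 (eh '' Set.Iio β)
    have hASmono : ∀ {α β : Ordinal.{u}}, α ≤ β → AS α ⊆ AS β := fun h =>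
      Set.insert_subset_insert (Set.image_mono (Set.Iio_subset_Iio h))
    let E : Ordinal.{u} → Set I := fun β => clS ubf (AS β)
    have hs0 : ∀ β, s0 ∈ E β := fun β => subset_clS _ _ (Set.mem_insert _ _)
    have hEmono : ∀ {α β : Ordinal.{u}}, α ≤ β → E α ⊆ E β := fun h =>
      clS_mono _ (hASmono h)
    have hEclosed : ∀ (β) {x y : I}, x ∈ E β → y ∈ E β → ubf x y ∈ E β := by
      intro β x y hx hy
      exact ub_mem_clS _ _ hx hy
    let f : Ordinal.{u} → L.Substructure U := fun β => ⨆ s : E β, M s.1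
    have hfmono : ∀ {α β : Ordinal.{u}}, α ≤ β → f α ≤ f β := by
      intro α β h
      exact iSup_le fun s => le_iSup (fun x : E β => M x.1) ⟨s.1, hEmono h s.2⟩
    -- apply the inductive hypothesis at each E β, β < o
    have hIH : ∀ β, β < o →
        ((f β ∈ A.K ∧ ∀ s : E β, A.strong (M s.1) (f β)) ∧
          ∀ N, (∀ s : E β, A.strong (M s.1) N) → A.strong (f β) N) := by
      intro β hβ
      have himg : #(eh '' Set.Iio β) ≤ β.card := by
        have h1 := Cardinal.mk_image_le_lift (f := eh) (s := Set.Iio β)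
        rw [Ordinal.mk_Iio_ordinal, Cardinal.lift_lift] at h1
        exact Cardinal.lift_le.mp h1
      have hcard : #(E β) < μ := by
        have h2 : #(AS β) ≤ β.card + 1 :=
          le_trans Cardinal.mk_insert_le (add_le_add_left himg 1)
        have h4 : β.card < μ := Cardinal.lt_ord.mp hβ
        have h5 : #(AS β) < μ :=
          lt_of_le_of_lt h2 (Cardinal.add_lt_of_lt (le_of_lt hcount) h4
            (lt_trans Cardinal.one_lt_aleph0 hcount))
        exact lt_of_le_of_lt (mk_clS_le ubf (AS β)) (max_lt hcount h5)
      haveI : Nonempty (E β) := ⟨⟨s0, hs0 β⟩⟩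
      exact IH (#(E β)) (lt_of_lt_of_le hcard hIκ) (E β) le_rfl (fun s => M s.1)
        (fun s t => ⟨⟨ubf s.1 t.1, hEclosed β s.2 t.2⟩, hub1 _ _, hub2 _ _⟩)
        (fun s t h => hmono _ _ h)
    have hcont : ∀ β, β ≤ o → Order.IsSuccLimit β → f β = osup f β := by
      intro β hβ hlim
      haveI : Nonempty (Set.Iio β) := ⟨⟨0, hlim.pos⟩⟩
      have hAS : AS β = ⋃ γ : Set.Iio β, AS γ.1 := by
        apply Set.Subset.antisymm
        · rintro x (rfl | ⟨γ, hγ, rfl⟩)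
          · exact Set.mem_iUnion.mpr ⟨⟨0, hlim.pos⟩, Set.mem_insert _ _⟩
          · exact Set.mem_iUnion.mpr ⟨⟨Order.succ γ, hlim.succ_lt hγ⟩,
              Set.mem_insert_of_mem _ ⟨γ, Order.lt_succ γ, rfl⟩⟩
        · exact Set.iUnion_subset fun γ => hASmono (le_of_lt γ.2)
      have hE : E β = ⋃ γ : Set.Iio β, E γ.1 := by
        show clS ubf (AS β) = _
        rw [hAS, clS_iUnion ubf _ ?_]
        rintro ⟨γ₁, h₁⟩ ⟨γ₂, h₂⟩
        exact ⟨⟨max γ₁ γ₂, Set.mem_Iio.mpr (max_lt h₁ h₂)⟩, hASmono (le_max_left _ _),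
          hASmono (le_max_right _ _)⟩
      apply le_antisymm
      · apply iSup_le
        rintro ⟨s, hs⟩
        rw [hE] at hs
        obtain ⟨T, ⟨⟨γ, hγ⟩, rfl⟩, hsT⟩ := hs
        calc M s ≤ f γ := le_iSup (fun x : E γ => M x.1) ⟨s, hsT⟩
          _ ≤ osup f β := le_iSup (fun p : {γ' : Ordinal.{u} // γ' < β} => f p.1) ⟨γ, hγ⟩
      · exact iSup_le fun γ => hfmono (le_of_lt γ.2)
    have hchain : ∀ α β, α ≤ β → β < o → A.strong (f α) (f β) := by
      intro α β hab hb
      refine (hIH α (lt_of_le_of_lt hab hb)).2 _ (fun s => ?_)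
      exact (hIH β hb).1.2 ⟨s.1, hEmono hab s.2⟩
    obtain ⟨hK, hstr⟩ := A.chain_closed o f holim hchain
      (fun β hb hl => hcont β (le_of_lt hb) hl)
    have htop : f o = ⨆ s, M s := by
      apply le_antisymm
      · exact iSup_le fun s => le_iSup M s.1
      · apply iSup_le
        intro s
        obtain ⟨γ, hγ, rfl⟩ := hsurj s
        exact le_iSup (fun x : E o => M x.1)
          ⟨eh γ, subset_clS _ _ (Set.mem_insert_of_mem _ ⟨γ, hγ, rfl⟩)⟩
    have hosup : osup f o = ⨆ s, M s := by rw [← hcont o le_rfl holim, htop]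
    have hsucclt : ∀ {γ : Ordinal.{u}}, γ < o → Order.succ γ < o :=
      fun hγ => holim.succ_lt hγ
    have hmemsucc : ∀ {γ : Ordinal.{u}}, eh γ ∈ E (Order.succ γ) := by
      intro γ
      exact subset_clS _ _ (Set.mem_insert_of_mem _ ⟨γ, Order.lt_succ γ, rfl⟩)
    refine ⟨⟨hosup ▸ hK, fun s => ?_⟩, fun N hN => ?_⟩
    · obtain ⟨γ, hγ, rfl⟩ := hsurj s
      have h2 := (hIH (Order.succ γ) (hsucclt hγ)).1.2 ⟨eh γ, hmemsucc⟩
      have h3 := hstr (Order.succ γ) (hsucclt hγ)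
      exact hosup ▸ A.strong_trans h2 h3
    · have hsm := A.smooth o f N holim hchain (fun β hb hl => hcont β (le_of_lt hb) hl)
        (fun α hα => (hIH α hα).2 N (fun s => hN s.1))
      exact hosup ▸ hsm


/-- In an AEC, a `≼`-directed family of models has a union which is a
model of `K` extending every member, and the union is below any common `≼`-extension. -/
theorem directed_union_in_AEC (A : AEC L U) {I : Type u} [PartialOrder I] [Nonempty I]
    (hdir : ∀ s t : I, ∃ r, s ≤ r ∧ t ≤ r)
    (M : I → L.Substructure U)
    (hmono : ∀ s t : I, s ≤ t → A.strong (M s) (M t)) :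
    ((⨆ s, M s) ∈ A.K ∧ ∀ s : I, A.strong (M s) (⨆ s, M s)) ∧
      ∀ N : L.Substructure U, (∀ s : I, A.strong (M s) N) →
        A.strong (⨆ s, M s) N :=
  AECP_all A #I I le_rfl M hdir hmono
end

section
/- Let 𝔰 be a semi-good λ-frame except possibly local character. Define K^{3,bs} as the class of triples (M, N, a) with M, N ∈ K_λ, M ≼ N, a ∈ N − M and tp(a, M, N) ∈ S^bs(M), and define (M, N, a) ≼_bs (M*, N*, a*) iff M ≼ M*, N ≼ N*, a = a*, and tp(a, M*, N*) does not fork over M. Then (K^{3,bs}, ≼_bs) is an abstract elementary class in λ with no ≼_bs-maximal element. -/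
open FirstOrder Cardinal Set

universe u

variable {L : FirstOrder.Language.{u, u}} {U : Type u} [L.Structure U]

/-- A semi-good `λ`-frame except local character: an AEC with `LST ≤ λ`, amalgamation, joint embedding and no
maximal model in `K_λ`, together with basic types and a nonforking relation satisfying
density, weak basic stability, invariance, monotonicity, uniqueness,
symmetry, existence of nonforking extensions and continuity. -/
structure FrameNoLC (L : FirstOrder.Language.{u, u}) (U : Type u) [L.Structure U]
    extends AEC L U : Type (u + 1) where
  lam : Cardinal.{u}
  lam_inf : ℵ₀ ≤ lam
  lst_le : lst ≤ lam
  amalg : toAEC.AmalgIn lam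
  jep : toAEC.JEPIn lam
  no_max : ∀ M ∈ K, #↥M = lam → ∃ N, strong M N ∧ #↥N = lam ∧ M ≠ N
  /-- `Bs M N a` says that the Galois type `tp(a, M, N)` is basic. -/
  Bs : L.Substructure U → L.Substructure U → U → Prop
  bs_spec : ∀ {M N a}, Bs M N a →
    strong M N ∧ #↥M = lam ∧ #↥N = lam ∧ a ∈ N ∧ a ∉ M
  bs_inv : ∀ {M N a N' a'}, Bs M N a → toAEC.TypeEq M (N, a) (N', a') →
    strong M N' → a' ∈ N' → Bs M N' a'
  bs_density : ∀ M N, strong M N → #↥M = lam → #↥N = lam → M ≠ N →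
    ∃ a, a ∈ N ∧ a ∉ M ∧ Bs M N a
  bs_weak_stab : ∀ M ∈ K, #↥M = lam →
    ∃ T : Set (L.Substructure U × U), #↥T ≤ Order.succ lam ∧
      ∀ N a, Bs M N a → ∃ p ∈ T, toAEC.TypeEq M (N, a) p
  /-- `NFrel M₀ M₁ M₃ a` says that the type `tp(a, M₁, M₃)` does not fork over `M₀`. -/
  NFrel : L.Substructure U → L.Substructure U → L.Substructure U → U → Prop
  nf_spec : ∀ {M₀ M₁ M₃ a}, NFrel M₀ M₁ M₃ a →
    strong M₀ M₁ ∧ Bs M₀ M₃ a ∧ Bs M₁ M₃ a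
  nf_mono : ∀ {M₀ M₀' M₁' M₁ M₃ M₃'' M₃' a}, NFrel M₀ M₁ M₃ a →
    strong M₀ M₀' → strong M₀' M₁' → strong M₁' M₁ →
    strong M₃ M₃' → strong M₁' M₃'' → strong M₃'' M₃' → a ∈ M₃'' →
    NFrel M₀' M₁' M₃'' a
  nf_inv : ∀ {M₀ M₁ M₃ a M₃' a'}, NFrel M₀ M₁ M₃ a →
    toAEC.TypeEq M₁ (M₃, a) (M₃', a') → strong M₁ M₃' → a' ∈ M₃' →
    NFrel M₀ M₁ M₃' a'
  nf_unique : ∀ {M N N₁ N₂ a b}, NFrel M N N₁ a → NFrel M N N₂ b →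
    toAEC.TypeEq M (N₁, a) (N₂, b) → toAEC.TypeEq N (N₁, a) (N₂, b)
  nf_symm : ∀ {M₀ M₁ M₃ a₁ a₂}, strong M₀ M₁ → strong M₁ M₃ → a₁ ∈ M₁ →
    Bs M₀ M₃ a₁ → NFrel M₀ M₁ M₃ a₂ →
    ∃ M₂ M₃', a₂ ∈ M₂ ∧ strong M₀ M₂ ∧ strong M₂ M₃' ∧ strong M₃ M₃' ∧
      NFrel M₀ M₂ M₃' a₁
  nf_ext : ∀ {M N N' a}, Bs M N' a → strong M N → #↥N = lam → M ≠ N →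
    ∃ N'' b, NFrel M N N'' b ∧ toAEC.TypeEq M (N', a) (N'', b)
  nf_cont : ∀ (δ : Ordinal.{u}) (f : Ordinal.{u} → L.Substructure U)
      (N : L.Substructure U) (a : U), Order.IsSuccLimit δ →
    (∀ α β, α ≤ β → β ≤ δ → strong (f α) (f β)) →
    (∀ β ≤ δ, Order.IsSuccLimit β → f β = osup f β) →
    strong (f δ) N → a ∈ N →
    (∀ α < δ, NFrel (f 0) (f α) N a) →
    NFrel (f 0) (f δ) N a

/-- The order `≼_bs` on basic triples: `(M, N, a) ≼_bs (M', N', a)` iff `M ≼ M'`,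
`N ≼ N'` and `tp(a, M', N')` does not fork over `M`. -/
def BsLe (s : FrameNoLC L U) (M N M' N' : L.Substructure U) (a : U) : Prop :=
  s.strong M M' ∧ s.strong N N' ∧ s.NFrel M M' N' a

section Helpers

/-- `osup` only depends on the values below `δ`. -/
lemma osup_congr' {f g : Ordinal.{u} → L.Substructure U} {δ : Ordinal.{u}}
    (h : ∀ γ < δ, f γ = g γ) : osup f δ = osup g δ :=
  iSup_congr fun γ => h γ.1 γ.2

/-- Monotonicity: enlarging the base model preserves nonforking. -/
lemma nf_base (s : FrameNoLC L U) {M₀ M₀' M₁ N : L.Substructure U} {a : U}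
    (h : s.NFrel M₀ M₁ N a) (h1 : s.strong M₀ M₀') (h2 : s.strong M₀' M₁) :
    s.NFrel M₀' M₁ N a := by
  obtain ⟨hM₀M₁, hBs0, hBs1⟩ := s.nf_spec h
  obtain ⟨hM₁N, _, _, haN, _⟩ := s.bs_spec hBs1
  have hNK : s.strong N N := s.strong_refl (s.strong_mem_right hM₁N)
  have hM₁M₁ : s.strong M₁ M₁ := s.strong_refl (s.strong_mem_left hM₁N)
  exact s.nf_mono h h1 h2 hM₁M₁ hNK hM₁N hNK haN

/-- Monotonicity: shrinking the middle model preserves nonforking. -/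
lemma nf_shrink (s : FrameNoLC L U) {M₀ M₁' M₁ N : L.Substructure U} {a : U}
    (h : s.NFrel M₀ M₁ N a) (h1 : s.strong M₀ M₁') (h2 : s.strong M₁' M₁) :
    s.NFrel M₀ M₁' N a := by
  obtain ⟨hM₀M₁, hBs0, hBs1⟩ := s.nf_spec h
  obtain ⟨hM₁N, _, _, haN, _⟩ := s.bs_spec hBs1
  have hNK : s.strong N N := s.strong_refl (s.strong_mem_right hM₁N)
  have hM₀M₀ : s.strong M₀ M₀ := s.strong_refl (s.strong_mem_left hM₀M₁)
  exact s.nf_mono h hM₀M₀ h1 h2 hNK (s.strong_trans h2 hM₁N) hNK haN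

/-- Monotonicity: enlarging the ambient model preserves nonforking. -/
lemma nf_big (s : FrameNoLC L U) {M₀ M₁ N N' : L.Substructure U} {a : U}
    (h : s.NFrel M₀ M₁ N a) (hNN' : s.strong N N') (hM₁N' : s.strong M₁ N')
    (haN' : a ∈ N') : s.NFrel M₀ M₁ N' a := by
  obtain ⟨hM₀M₁, hBs0, hBs1⟩ := s.nf_spec h
  have hM₀M₀ : s.strong M₀ M₀ := s.strong_refl (s.strong_mem_left hM₀M₁)
  have hM₁M₁ : s.strong M₁ M₁ := s.strong_refl (s.strong_mem_right hM₀M₁)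
  have hN'N' : s.strong N' N' := s.strong_refl (s.strong_mem_right hNN')
  exact s.nf_mono h hM₀M₀ hM₀M₁ hM₁M₁ hNN' hM₁N' hN'N' haN'

/-- Existence: a basic type does not fork over its own domain. -/
lemma nf_exist (s : FrameNoLC L U) {M N : L.Substructure U} {a : U}
    (h : s.Bs M N a) : s.NFrel M M N a := by
  obtain ⟨hMN, hM, hN, haN, haM⟩ := s.bs_spec h
  have hMne : M ≠ N := fun e => haM (e ▸ haN)
  obtain ⟨N'', b, hnf, heq⟩ := s.nf_ext h hMN hN hMne
  have hMM : s.strong M M := s.strong_refl (s.strong_mem_left hMN)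
  have hnf2 : s.NFrel M M N'' b := nf_shrink s hnf hMM hMN
  exact s.nf_inv hnf2 (Relation.EqvGen.symm _ _ heq) hMN haN

/-- Transitivity of nonforking. -/
lemma nf_trans (s : FrameNoLC L U) {M M' M'' N'' : L.Substructure U} {a : U}
    (h1 : s.NFrel M M' N'' a) (h2 : s.NFrel M' M'' N'' a) :
    s.NFrel M M'' N'' a := by
  obtain ⟨hMM', hBsM, hBsM'⟩ := s.nf_spec h1
  obtain ⟨hM'M'', _, hBsM''⟩ := s.nf_spec h2
  obtain ⟨hMN'', _, _, haN'', haM⟩ := s.bs_spec hBsM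
  obtain ⟨hM''N'', _, hcard, _, _⟩ := s.bs_spec hBsM''
  obtain ⟨_, hcardM'', _, _, _⟩ := s.bs_spec hBsM''
  have hMM'' : s.strong M M'' := s.strong_trans hMM' hM'M''
  by_cases he : M = M''
  · subst he
    exact nf_shrink s h1 (s.strong_refl (s.strong_mem_left hMM')) hMM'
  · obtain ⟨Nq, b, hq, heq⟩ := s.nf_ext hBsM hMM'' hcardM'' he
    obtain ⟨_, _, hBsq⟩ := s.nf_spec hq
    obtain ⟨hM''Nq, _, _, hbNq, _⟩ := s.bs_spec hBsq
    have h4 : s.NFrel M' M'' Nq b := nf_base s hq hMM' hM'M''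
    have h5 : s.NFrel M M' Nq b := nf_shrink s hq hMM' hM'M''
    have hT1 := s.nf_unique h1 h5 heq
    have hT2 := s.nf_unique h2 h4 hT1
    exact s.nf_inv hq (Relation.EqvGen.symm _ _ hT2) hM''N'' haN''

end Helpers

/-- In a semi-good `λ`-frame except possibly local character, the class
`K^{3,bs}` of basic triples with the order `≼_bs` is an abstract elementary class in `λ`
(partial order contained in inclusion, coherence, closure under unions of increasing
continuous chains of length `< λ⁺`, smoothness) with no `≼_bs`-maximal element. -/
theorem Kbs_is_aec_in_lambda (s : FrameNoLC L U) :
    -- reflexivity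
    (∀ M N a, s.Bs M N a → BsLe s M N M N a) ∧
    -- transitivity
    (∀ M N M' N' M'' N'' a, s.Bs M N a → BsLe s M N M' N' a →
        BsLe s M' N' M'' N'' a → BsLe s M N M'' N'' a) ∧
    -- antisymmetry
    (∀ M N M' N' a, BsLe s M N M' N' a → BsLe s M' N' M N a → M = M' ∧ N = N') ∧
    -- contained in the inclusion relation
    (∀ M N M' N' a, s.Bs M N a → BsLe s M N M' N' a → M ≤ M' ∧ N ≤ N') ∧
    -- coherence (axiom (e))
    (∀ M N M' N' M'' N'' a, s.Bs M N a → s.Bs M' N' a →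
        M ≤ M' → N ≤ N' → BsLe s M' N' M'' N'' a → BsLe s M N M'' N'' a →
        BsLe s M N M' N' a) ∧
    -- closure under unions of `≼_bs`-increasing continuous chains of length `< λ⁺`
    (∀ (δ : Ordinal.{u}) (fM fN : Ordinal.{u} → L.Substructure U) (a : U),
        Order.IsSuccLimit δ → δ < (Order.succ s.lam).ord →
        (∀ α < δ, s.Bs (fM α) (fN α) a) →
        (∀ α β, α ≤ β → β < δ → BsLe s (fM α) (fN α) (fM β) (fN β) a) →
        (∀ β < δ, Order.IsSuccLimit β → fM β = osup fM β ∧ fN β = osup fN β) →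
        s.Bs (osup fM δ) (osup fN δ) a ∧
          ∀ α < δ, BsLe s (fM α) (fN α) (osup fM δ) (osup fN δ) a) ∧
    -- smoothness
    (∀ (δ : Ordinal.{u}) (fM fN : Ordinal.{u} → L.Substructure U)
        (Mt Nt : L.Substructure U) (a : U),
        Order.IsSuccLimit δ → δ < (Order.succ s.lam).ord →
        (∀ α < δ, s.Bs (fM α) (fN α) a) →
        (∀ α β, α ≤ β → β < δ → BsLe s (fM α) (fN α) (fM β) (fN β) a) →
        (∀ β < δ, Order.IsSuccLimit β → fM β = osup fM β ∧ fN β = osup fN β) →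
        s.Bs Mt Nt a →
        (∀ α < δ, BsLe s (fM α) (fN α) Mt Nt a) →
        BsLe s (osup fM δ) (osup fN δ) Mt Nt a) ∧
    -- no `≼_bs`-maximal element
    (∀ M N a, s.Bs M N a → ∃ M' N', s.Bs M' N' a ∧ BsLe s M N M' N' a ∧
        (M ≠ M' ∨ N ≠ N')) := by
  refine ⟨?_, ?_, ?_, ?_, ?_, ?_, ?_, ?_⟩
  · -- reflexivity
    intro M N a h
    obtain ⟨hMN, _, _, _, _⟩ := s.bs_spec h
    exact ⟨s.strong_refl (s.strong_mem_left hMN),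
      s.strong_refl (s.strong_mem_right hMN), nf_exist s h⟩
  · -- transitivity
    rintro M N M' N' M'' N'' a _ ⟨hMM', hNN', hnf1⟩ ⟨hM'M'', hN'N'', hnf2⟩
    refine ⟨s.strong_trans hMM' hM'M'', s.strong_trans hNN' hN'N'', ?_⟩
    obtain ⟨_, _, hBsM'⟩ := s.nf_spec hnf1
    obtain ⟨hM'N', _, _, haN', _⟩ := s.bs_spec hBsM'
    have hnf1' : s.NFrel M M' N'' a :=
      nf_big s hnf1 hN'N'' (s.strong_trans hM'N' hN'N'') (s.strong_le hN'N'' haN')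
    exact nf_trans s hnf1' hnf2
  · -- antisymmetry
    rintro M N M' N' a ⟨hMM', hNN', _⟩ ⟨hM'M, hN'N, _⟩
    exact ⟨le_antisymm (s.strong_le hMM') (s.strong_le hM'M),
      le_antisymm (s.strong_le hNN') (s.strong_le hN'N)⟩
  · -- contained in inclusion
    rintro M N M' N' a _ ⟨hMM', hNN', _⟩
    exact ⟨s.strong_le hMM', s.strong_le hNN'⟩
  · -- coherence
    rintro M N M' N' M'' N'' a hBs hBs' hMle hNle ⟨hM'M'', hN'N'', _⟩
      ⟨hMM'', hNN'', hnf⟩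
    have hMM' : s.strong M M' := s.coherence hMle hMM'' hM'M''
    have hNN' : s.strong N N' := s.coherence hNle hNN'' hN'N''
    refine ⟨hMM', hNN', ?_⟩
    obtain ⟨hM'N', _, _, haN', _⟩ := s.bs_spec hBs'
    have hstep : s.NFrel M M' N'' a := nf_shrink s hnf hMM' hM'M''
    obtain ⟨_, _, hBsmid⟩ := s.nf_spec hstep
    obtain ⟨hM'N'', _, _, _, _⟩ := s.bs_spec hBsmid
    have hMM : s.strong M M := s.strong_refl (s.strong_mem_left hMM')
    have hN''N'' : s.strong N'' N'' := s.strong_refl (s.strong_mem_right hN'N'')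
    exact s.nf_mono hstep hMM hMM' (s.strong_refl (s.strong_mem_right hMM'))
      hN''N'' hM'N' hN'N'' haN'
  · -- chain closure
    intro δ fM fN a hlim _ hBs hLe hcont
    have hMmono : ∀ α β, α ≤ β → β < δ → s.strong (fM α) (fM β) :=
      fun α β h hb => (hLe α β h hb).1
    have hNmono : ∀ α β, α ≤ β → β < δ → s.strong (fN α) (fN β) :=
      fun α β h hb => (hLe α β h hb).2.1
    have hMcont : ∀ β, β < δ → Order.IsSuccLimit β → fM β = osup fM β :=
      fun β hb hl => (hcont β hb hl).1
    have hNcont : ∀ β, β < δ → Order.IsSuccLimit β → fN β = osup fN β :=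
      fun β hb hl => (hcont β hb hl).2
    obtain ⟨hMδK, hMδstrong⟩ := s.chain_closed δ fM hlim hMmono hMcont
    obtain ⟨hNδK, hNδstrong⟩ := s.chain_closed δ fN hlim hNmono hNcont
    have hstrongMN : ∀ α, α < δ → s.strong (fM α) (osup fN δ) :=
      fun α hα => s.strong_trans (s.bs_spec (hBs α hα)).1 (hNδstrong α hα)
    have hMδNδ : s.strong (osup fM δ) (osup fN δ) :=
      s.smooth δ fM (osup fN δ) hlim hMmono hMcont hstrongMN
    have haNδ : a ∈ osup fN δ :=
      s.strong_le (hNδstrong 0 hlim.pos) (s.bs_spec (hBs 0 hlim.pos)).2.2.2.1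
    -- nonforking over `fM 0` at each level, computed inside `osup fN δ`
    have hnflev : ∀ α, α < δ → s.NFrel (fM 0) (fM α) (osup fN δ) a := by
      intro α hα
      have h0 : s.NFrel (fM 0) (fM α) (fN α) a := (hLe 0 α (zero_le (a := α)) hα).2.2
      exact nf_big s h0 (hNδstrong α hα) (hstrongMN α hα) haNδ
    -- the auxiliary continuous chain reaching `osup fM δ`
    set g : Ordinal.{u} → L.Substructure U :=
      fun β => if β < δ then fM β else osup fM δ with hg
    have hgδ : g δ = osup fM δ := by simp [hg]
    have hglt : ∀ β, β < δ → g β = fM β := by intro β hβ; simp [hg, hβ]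
    have hgmono : ∀ α β, α ≤ β → β ≤ δ → s.strong (g α) (g β) := by
      intro α β hab hbd
      rcases lt_or_eq_of_le hbd with hb | hb
      · rw [hglt α (lt_of_le_of_lt hab hb), hglt β hb]; exact hMmono α β hab hb
      · subst hb
        rw [hgδ]
        rcases lt_or_eq_of_le hab with ha | ha
        · rw [hglt α ha]; exact hMδstrong α ha
        · subst ha; rw [hgδ]; exact s.strong_refl hMδK
    have hgcont : ∀ β, β ≤ δ → Order.IsSuccLimit β → g β = osup g β := by
      intro β hbd hbl
      have hcg : osup g β = osup fM β :=
        osup_congr' fun γ hγ => hglt γ (lt_of_lt_of_le hγ hbd)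
      rcases lt_or_eq_of_le hbd with hb | hb
      · rw [hglt β hb, hcg]; exact hMcont β hb hbl
      · subst hb; rw [hgδ, hcg]
    have hnf0 : ∀ α, α < δ → s.NFrel (g 0) (g α) (osup fN δ) a := by
      intro α hα
      rw [hglt 0 hlim.pos, hglt α hα]
      exact hnflev α hα
    have hmain :=
      s.nf_cont δ g (osup fN δ) a hlim hgmono hgcont (hgδ ▸ hMδNδ) haNδ hnf0
    rw [hglt 0 hlim.pos, hgδ] at hmain
    have hBsδ : s.Bs (osup fM δ) (osup fN δ) a := (s.nf_spec hmain).2.2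
    refine ⟨hBsδ, fun α hα => ⟨hMδstrong α hα, hNδstrong α hα, ?_⟩⟩
    exact nf_base s hmain (hMmono 0 α (zero_le (a := α)) hα) (hMδstrong α hα)
  · -- smoothness
    intro δ fM fN Mt Nt a hlim _ hBs hLe hcont hBsT hLeT
    have hMmono : ∀ α β, α ≤ β → β < δ → s.strong (fM α) (fM β) :=
      fun α β h hb => (hLe α β h hb).1
    have hNmono : ∀ α β, α ≤ β → β < δ → s.strong (fN α) (fN β) :=
      fun α β h hb => (hLe α β h hb).2.1
    have hMcont : ∀ β, β < δ → Order.IsSuccLimit β → fM β = osup fM β :=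
      fun β hb hl => (hcont β hb hl).1
    have hNcont : ∀ β, β < δ → Order.IsSuccLimit β → fN β = osup fN β :=
      fun β hb hl => (hcont β hb hl).2
    obtain ⟨hMδK, hMδstrong⟩ := s.chain_closed δ fM hlim hMmono hMcont
    have hMδMt : s.strong (osup fM δ) Mt :=
      s.smooth δ fM Mt hlim hMmono hMcont fun α hα => (hLeT α hα).1
    have hNδNt : s.strong (osup fN δ) Nt :=
      s.smooth δ fN Nt hlim hNmono hNcont fun α hα => (hLeT α hα).2.1
    refine ⟨hMδMt, hNδNt, ?_⟩
    exact nf_base s (hLeT 0 hlim.pos).2.2 (hMδstrong 0 hlim.pos) hMδMt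
  · -- no maximal element
    intro M N a h
    obtain ⟨hMN, hM, hN, haN, haM⟩ := s.bs_spec h
    obtain ⟨N', hNN', hN', hne⟩ := s.no_max N (s.strong_mem_right hMN) hN
    have hnf : s.NFrel M M N a := nf_exist s h
    have hnf' : s.NFrel M M N' a :=
      nf_big s hnf hNN' (s.strong_trans hMN hNN') (s.strong_le hNN' haN)
    have hBs' : s.Bs M N' a := (s.nf_spec hnf').2.2
    exact ⟨M, N', hBs', ⟨s.strong_refl (s.strong_mem_left hMN), hNN', hnf'⟩,
      Or.inr hne⟩
end

section
/- Let 𝔰 be a semi-good λ-frame except local character. Suppose M₀ ≼ M₁ ≼ M₂ are models of cardinality ≥ λ, p ∈ S^bs_{≥λ}(M₂) does not fork over M₁, and p↾M₁ does not fork over M₀. Then p does not fork over M₀ (transitivity of the lifted nonforking relation). -/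
open FirstOrder Cardinal Set

universe u

variable {L : FirstOrder.Language.{u, u}} {U : Type u} [L.Structure U]

/-- `tp(a, N₁, Mbig)` does not fork over `N₀` (where `Mbig` may be large), witnessed
inside a small model: there is `N₂ ∈ K_λ` with `N₁ ≼ N₂ ≼ Mbig`, `a ∈ N₂` and
`tp(a, N₁, N₂)` not forking over `N₀`. -/
def NFat (s : FrameNoLC L U) (N₀ N₁ Mbig : L.Substructure U) (a : U) : Prop :=
  ∃ N₂ : L.Substructure U, s.strong N₁ N₂ ∧ s.strong N₂ Mbig ∧ a ∈ N₂ ∧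
    s.NFrel N₀ N₁ N₂ a

/-- `tp(a, M₁, M₂)` does not fork over the small model `N₀ ∈ K_λ`, `N₀ ≼ M₁`
(Definition 2.9): every intermediate small model witnesses nonforking over `N₀`. -/
def NFgeOver (s : FrameNoLC L U) (N₀ M₁ M₂ : L.Substructure U) (a : U) : Prop :=
  s.strong N₀ M₁ ∧ #↥N₀ = s.lam ∧
    ∀ N : L.Substructure U, #↥N = s.lam → s.strong N₀ N → s.strong N M₁ →
      NFat s N₀ N M₂ a

/-- `tp(a, M₁, M₂)` does not fork over `M₀` for models of cardinality `≥ λ`. -/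
def NFgeBig (s : FrameNoLC L U) (M₀ M₁ M₂ : L.Substructure U) (a : U) : Prop :=
  s.strong M₀ M₁ ∧
    ∃ N₀ : L.Substructure U, #↥N₀ = s.lam ∧ s.strong N₀ M₀ ∧ NFgeOver s N₀ M₁ M₂ a

/-- `tp(a, M, N)` is a basic type over the (possibly large) model `M`, i.e. it does not
fork over some submodel of `M` of cardinality `λ`. -/
def BsGe (s : FrameNoLC L U) (M N : L.Substructure U) (a : U) : Prop :=
  ∃ N₀ : L.Substructure U, NFgeOver s N₀ M N a

/-- Auxiliary: find a small strong submodel of `Mbig` containing two given small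
strong submodels. -/
private lemma small_ext (s : FrameNoLC L U) {Mbig P Q : L.Substructure U}
    (hM : Mbig ∈ s.K) (hP : s.strong P Mbig) (hQ : s.strong Q Mbig)
    (hcP : #↥P = s.lam) (hcQ : #↥Q ≤ s.lam) :
    ∃ M : L.Substructure U, P ≤ M ∧ Q ≤ M ∧ s.strong M Mbig ∧ #↥M = s.lam := by
  obtain ⟨M, hMK, hsub, hstr, hcard⟩ := s.lst_prop Mbig hM ((P : Set U) ∪ (Q : Set U))
    (Set.union_subset (SetLike.coe_subset_coe.2 (s.strong_le hP))
      (SetLike.coe_subset_coe.2 (s.strong_le hQ)))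
  have hPM : P ≤ M := SetLike.coe_subset_coe.1 (Set.Subset.trans Set.subset_union_left hsub)
  have hQM : Q ≤ M := SetLike.coe_subset_coe.1 (Set.Subset.trans Set.subset_union_right hsub)
  refine ⟨M, hPM, hQM, hstr, le_antisymm ?_ ?_⟩
  · calc #↥M ≤ s.lst + #↥((P : Set U) ∪ (Q : Set U)) := hcard
      _ ≤ s.lam + (#↥(P : Set U) + #↥(Q : Set U)) :=
        add_le_add s.lst_le (Cardinal.mk_union_le _ _)
      _ ≤ s.lam + (s.lam + s.lam) := by
        refine add_le_add (le_refl _) (add_le_add ?_ ?_)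
        · rw [SetLike.coe_sort_coe, hcP]
        · rw [SetLike.coe_sort_coe]; exact hcQ
      _ = s.lam := by
        rw [Cardinal.add_eq_self s.lam_inf, Cardinal.add_eq_self s.lam_inf]
  · calc s.lam = #↥P := hcP.symm
      _ = #↥(P : Set U) := by rw [SetLike.coe_sort_coe]
      _ ≤ #↥(M : Set U) := Cardinal.mk_le_mk_of_subset (SetLike.coe_subset_coe.2 hPM)
      _ = #↥M := by rw [SetLike.coe_sort_coe]

/-- Auxiliary: two Galois types with the same realization inside a common ambient
model are equal (witnessed by the identity embedding). -/
private lemma typeEq_id (s : FrameNoLC L U) {N₀ P Q Nbig : L.Substructure U} {a : U}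
    (hbig : Nbig ∈ s.K)
    (h0P : s.strong N₀ P) (h0Q : s.strong N₀ Q)
    (hP : s.strong P Nbig) (hQ : s.strong Q Nbig)
    (haP : a ∈ P) (haQ : a ∈ Q) :
    s.TypeEq N₀ (P, a) (Q, a) := by
  obtain ⟨R, hRK, hsub, hstr, -⟩ := s.lst_prop Nbig hbig ((P : Set U) ∪ (Q : Set U))
    (Set.union_subset (SetLike.coe_subset_coe.2 (s.strong_le hP))
      (SetLike.coe_subset_coe.2 (s.strong_le hQ)))
  have hPR : P ≤ R := SetLike.coe_subset_coe.1 (Set.Subset.trans Set.subset_union_left hsub)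
  have hQR : Q ≤ R := SetLike.coe_subset_coe.1 (Set.Subset.trans Set.subset_union_right hsub)
  have hPRs : s.strong P R := s.coherence hPR hP hstr
  have hQRs : s.strong Q R := s.coherence hQR hQ hstr
  refine Relation.EqvGen.rel _ _ ⟨h0P, h0Q, haP, haQ, R, hQRs, id, ⟨P,
    FirstOrder.Language.Equiv.refl L ↥P, hPRs, fun _ => rfl⟩, fun _ _ => rfl, rfl⟩

/-- (Transitivity of the lifted nonforking relation.) In a semi-good
`λ`-frame except local character: if `M₀ ≼ M₁ ≼ M₂` are models of cardinality `≥ λ`,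
`p = tp(a, M₂, N) ∈ S^{bs}_{≥λ}(M₂)` does not fork over `M₁`, and `p↾M₁` does not fork
over `M₀`, then `p` does not fork over `M₀`. -/
theorem transitivity_of_lifted_nonforking (s : FrameNoLC L U)
    (M₀ M₁ M₂ N : L.Substructure U) (a : U)
    (hc₀ : s.lam ≤ #↥M₀) (hc₁ : s.lam ≤ #↥M₁) (hc₂ : s.lam ≤ #↥M₂)
    (h01 : s.strong M₀ M₁) (h12 : s.strong M₁ M₂)
    (hN : s.strong M₂ N) (ha : a ∈ N) (ha' : a ∉ M₂)
    (hbs : BsGe s M₂ N a)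
    (hp1 : NFgeBig s M₁ M₂ N a) (hp0 : NFgeBig s M₀ M₁ N a) :
    NFgeBig s M₀ M₂ N a := by
  obtain ⟨-, N₁h, hcN₁, hN₁M₁, hN₁M₂, -, hforall1⟩ := hp1
  obtain ⟨-, N₀, hcN₀, hN₀M₀, hN₀M₁, -, hforall0⟩ := hp0
  have hM₁K : M₁ ∈ s.K := s.strong_mem_right h01
  have hM₂K : M₂ ∈ s.K := s.strong_mem_right h12
  have hNK : N ∈ s.K := s.strong_mem_right hN
  refine ⟨s.strong_trans h01 h12, N₀, hcN₀, hN₀M₀, s.strong_trans hN₀M₁ h12, hcN₀, ?_⟩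
  intro N' hcN' hN₀N' hN'M₂
  -- find small `Ns ≼ M₁` containing `N₀` and `N₁h`
  obtain ⟨Ns, hN₀leNs, hN₁leNs, hNsM₁, hcNs⟩ :=
    small_ext s hM₁K hN₀M₁ hN₁M₁ hcN₀ hcN₁.le
  have hN₀Ns : s.strong N₀ Ns := s.coherence hN₀leNs hN₀M₁ hNsM₁
  have hN₁Ns : s.strong N₁h Ns := s.coherence hN₁leNs hN₁M₁ hNsM₁
  have hNsM₂ : s.strong Ns M₂ := s.strong_trans hNsM₁ h12
  -- find small `M ≼ M₂` containing `N'` and `Ns`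
  obtain ⟨M, hN'leM, hNsleM, hMM₂, hcM⟩ := small_ext s hM₂K hN'M₂ hNsM₂ hcN' hcNs.le
  have hN'M : s.strong N' M := s.coherence hN'leM hN'M₂ hMM₂
  have hNsM : s.strong Ns M := s.coherence hNsleM hNsM₂ hMM₂
  have hN₁M : s.strong N₁h M := s.strong_trans hN₁Ns hNsM
  have hN₀Mstr : s.strong N₀ M := s.strong_trans hN₀Ns hNsM
  have hN₀K : N₀ ∈ s.K := s.strong_mem_left hN₀Ns
  have hMK : M ∈ s.K := s.strong_mem_right hNsM
  -- nonforking witnesses from the two hypotheses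
  obtain ⟨P, hNsP, hPN, haP, hNF0⟩ := hforall0 Ns hcNs hN₀Ns hNsM₁
  obtain ⟨Q, hMQ, hQN, haQ, hNF1⟩ := hforall1 M hcM hN₁M hMM₂
  have hQK : Q ∈ s.K := s.strong_mem_right hMQ
  by_cases hdeg : N₀ = M
  · -- degenerate case: everything collapses to `N₀`
    have hN'eq : N' = N₀ := le_antisymm (hdeg ▸ hN'leM) (s.strong_le hN₀N')
    have hNseq : Ns = N₀ := le_antisymm (hdeg ▸ hNsleM) (s.strong_le hN₀Ns)
    rw [hNseq] at hNsP hNF0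
    rw [hN'eq]
    exact ⟨P, hNsP, hPN, haP, hNF0⟩
  -- main case: use extension + uniqueness (transitivity inside `K_λ`)
  have hBsP : s.Bs N₀ P a := (s.nf_spec hNF0).2.1
  obtain ⟨N'', b, hNF2, hTeq⟩ := s.nf_ext hBsP hN₀Mstr hcM hdeg
  have hBsMb : s.Bs M N'' b := (s.nf_spec hNF2).2.2
  have hMN'' : s.strong M N'' := (s.bs_spec hBsMb).1
  have hbN'' : b ∈ N'' := (s.bs_spec hBsMb).2.2.2.1
  have hN''K : N'' ∈ s.K := s.strong_mem_right hMN''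
  have hNsN'' : s.strong Ns N'' := s.strong_trans hNsM hMN''
  -- restrict `tp(b, M, N'')` to `Ns`
  have mono1 : s.NFrel N₀ Ns N'' b :=
    s.nf_mono hNF2 (s.strong_refl hN₀K) hN₀Ns hNsM (s.strong_refl hN''K) hNsN''
      (s.strong_refl hN''K) hbN''
  -- uniqueness over `N₀` at middle `Ns`
  have uniq1 : s.TypeEq Ns (P, a) (N'', b) := s.nf_unique hNF0 mono1 hTeq
  -- raise bases to `Ns`
  have raiseQ : s.NFrel Ns M Q a :=
    s.nf_mono hNF1 hN₁Ns hNsM (s.strong_refl hMK) (s.strong_refl hQK) hMQ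
      (s.strong_refl hQK) haQ
  have raiseN'' : s.NFrel Ns M N'' b :=
    s.nf_mono hNF2 hN₀Ns hNsM (s.strong_refl hMK) (s.strong_refl hN''K) hMN''
      (s.strong_refl hN''K) hbN''
  -- `tp(a, Ns, P) = tp(a, Ns, Q)` via the identity (both sit inside `N`)
  have idPQ : s.TypeEq Ns (P, a) (Q, a) :=
    typeEq_id s hNK hNsP (s.strong_trans hNsM hMQ) hPN hQN haP haQ
  have chain : s.TypeEq Ns (N'', b) (Q, a) :=
    Relation.EqvGen.trans _ _ _ (Relation.EqvGen.symm _ _ uniq1) idPQ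
  -- uniqueness over `Ns` at middle `M`
  have uniq2 : s.TypeEq M (N'', b) (Q, a) := s.nf_unique raiseN'' raiseQ chain
  -- transfer: `tp(a, M, Q)` does not fork over `N₀`
  have final0 : s.NFrel N₀ M Q a := s.nf_inv hNF2 uniq2 hMQ haQ
  have hN'Q : s.strong N' Q := s.strong_trans hN'M hMQ
  have final : s.NFrel N₀ N' Q a :=
    s.nf_mono final0 (s.strong_refl hN₀K) hN₀N' hN'M (s.strong_refl hQK) hN'Q
      (s.strong_refl hQK) haQ
  exact ⟨Q, hN'Q, hQN, haQ, final⟩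
end
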